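/- Let K ⊆ ℝ^d be a cone. Then there is a constant c > 0 (depending only on K and d) such that for every m ≥ 1 and all d×d real matrices M_1,…,M_m satisfying M_i K ⊆ K for each i, one has ‖M_1 + ⋯ + M_m‖ ≥ c · (‖M_1‖ + ⋯ + ‖M_m‖), where ‖·‖ is the operator norm on d×d real matrices induced by the Euclidean norm on ℝ^d. -/

import Mathlib

open Matrix Filter Topology

/-- The Euclidean norm on `ℝ^d`. -/
noncomputable def euclNorm {d : ℕ} (x : Fin d → ℝ) : ℝ :=
  Real.sqrt (∑ i, (x i) ^ 2)

/-- The operator norm on `d × d` real matrices induced by the Euclidean norm on `ℝ^d`. -/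
noncomputable def matOpNorm {d : ℕ} (M : Matrix (Fin d) (Fin d) ℝ) : ℝ :=
  sSup {r : ℝ | ∃ x : Fin d → ℝ, euclNorm x ≤ 1 ∧ r = euclNorm (M.mulVec x)}

/-- The spectral radius of a real square matrix: the maximum of `|μ|` over the complex
eigenvalues `μ` (roots of the characteristic polynomial over `ℂ`). -/
noncomputable def specRad {d : ℕ} (M : Matrix (Fin d) (Fin d) ℝ) : ℝ :=
  sSup {r : ℝ | ∃ μ : ℂ, (M.map Complex.ofReal).charpoly.IsRoot μ ∧ r = ‖μ‖}

/-- The product `M_{w 0} M_{w 1} ⋯ M_{w (n-1)}` over a word `w` of length `n`. -/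
noncomputable def wordProd {d k : ℕ} (A : Fin k → Matrix (Fin d) (Fin d) ℝ) {n : ℕ}
    (w : Fin n → Fin k) : Matrix (Fin d) (Fin d) ℝ :=
  (List.ofFn (fun j => A (w j))).prod

/-- A cone in `ℝ^d`: a topologically closed set with nonempty interior, closed under
addition and under multiplication by nonnegative reals, with `K ∩ (-K) = {0}`. -/
def IsCone {d : ℕ} (K : Set (Fin d → ℝ)) : Prop :=
  IsClosed K ∧ (interior K).Nonempty ∧
    (∀ x ∈ K, ∀ y ∈ K, x + y ∈ K) ∧
    (∀ c : ℝ, 0 ≤ c → ∀ x ∈ K, c • x ∈ K) ∧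
    (∀ x ∈ K, -x ∈ K → x = 0)

/-- reverse triangle inequality for matrices preserving a cone `K ⊆ ℝ^d`:
there is `c > 0` depending only on `K` and `d` with
`‖M_1 + ⋯ + M_m‖ ≥ c (‖M_1‖ + ⋯ + ‖M_m‖)` whenever each `M_i` maps `K` into `K`. -/

local notation "⟪" x ", " y "⟫" => @inner ℝ _ _ x y

lemma euclNorm_eq_norm {d : ℕ} (y : EuclideanSpace ℝ (Fin d)) :
    euclNorm (WithLp.equiv 2 _ y) = ‖y‖ := by
  rw [EuclideanSpace.norm_eq, euclNorm]
  congr 1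
  refine Finset.sum_congr rfl fun i _ => ?_
  rw [WithLp.equiv_apply, Real.norm_eq_abs, sq_abs]

lemma matOpNorm_eq {d : ℕ} (M : Matrix (Fin d) (Fin d) ℝ) :
    matOpNorm M = ‖Matrix.toEuclideanCLM (𝕜 := ℝ) M‖ := by
  rw [← ContinuousLinearMap.sSup_unitClosedBall_eq_norm, matOpNorm]
  congr 1
  ext r
  simp only [Set.mem_image, Set.mem_setOf_eq]
  constructor
  · rintro ⟨x, hx, rfl⟩
    refine ⟨(WithLp.equiv 2 _).symm x, ?_, ?_⟩
    · rw [Metric.mem_closedBall, dist_zero_right, ← euclNorm_eq_norm]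
      simpa using hx
    · rw [WithLp.equiv_symm_apply, Matrix.toEuclideanCLM_toLp, ← euclNorm_eq_norm]
      simp [Matrix.toLin'_apply]
  · rintro ⟨y, hy, rfl⟩
    refine ⟨WithLp.equiv 2 _ y, by rw [euclNorm_eq_norm]; exact mem_closedBall_zero_iff.1 hy, ?_⟩
    rw [← euclNorm_eq_norm]
    congr 1

/-- Strictly positive functional on a closed pointed cone with nonempty interior. -/
lemma posFunctional {d : ℕ} (K₂ : Set (EuclideanSpace ℝ (Fin d)))
    (hclosed : IsClosed K₂)
    (hadd : ∀ x ∈ K₂, ∀ y ∈ K₂, x + y ∈ K₂)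
    (hsmul : ∀ c : ℝ, 0 ≤ c → ∀ x ∈ K₂, c • x ∈ K₂)
    (hpointed : ∀ x ∈ K₂, -x ∈ K₂ → x = 0)
    (hne : K₂.Nonempty) :
    ∃ v : EuclideanSpace ℝ (Fin d), ∃ ε : ℝ, 0 < ε ∧
      ∀ x ∈ K₂, ε * ‖x‖ ≤ ⟪x, v⟫ := by
  classical
  let C : ProperCone ℝ (EuclideanSpace ℝ (Fin d)) :=
    { carrier := K₂
      add_mem' := fun hx hy => hadd _ hx _ hy
      zero_mem' := by obtain ⟨x, hx⟩ := hne; simpa using hsmul 0 le_rfl x hx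
      smul_mem' := fun c x hx => hsmul c c.2 x hx
      isClosed' := hclosed }
  have hCK : (C : Set (EuclideanSpace ℝ (Fin d))) = K₂ := rfl
  have hbi : ProperCone.innerDual ((ProperCone.innerDual K₂ : ProperCone ℝ (EuclideanSpace ℝ (Fin d))) :
      Set (EuclideanSpace ℝ (Fin d))) = C :=
    ProperCone.innerDual_innerDual C
  set D : Set (EuclideanSpace ℝ (Fin d)) := ((ProperCone.innerDual K₂ : ProperCone ℝ (EuclideanSpace ℝ (Fin d))) : Set (EuclideanSpace ℝ (Fin d))) with hD
  have h0D : (0 : EuclideanSpace ℝ (Fin d)) ∈ D := (ProperCone.innerDual K₂).zero_mem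
  have hDconv : Convex ℝ D := (ProperCone.innerDual K₂).convex
  have hDint : (interior D).Nonempty := by
    rw [hDconv.interior_nonempty_iff_affineSpan_eq_top]
    by_contra haff
    have hvs : vectorSpan ℝ D ≠ ⊤ := fun h => by
      exact haff ((AffineSubspace.affineSpan_eq_top_iff_vectorSpan_eq_top_of_nonempty ℝ
        (EuclideanSpace ℝ (Fin d)) (EuclideanSpace ℝ (Fin d)) (s := D) ⟨0, h0D⟩).2 h)
    have hspan : vectorSpan ℝ D = Submodule.span ℝ D := by
      rw [vectorSpan_eq_span_vsub_set_right ℝ h0D]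
      congr 1
      ext w
      simp [vsub_eq_sub]
    have hsne : Submodule.span ℝ D ≠ ⊤ := hspan ▸ hvs
    have hob : (Submodule.span ℝ D)ᗮ ≠ ⊥ := fun h =>
      hsne (Submodule.orthogonal_eq_bot_iff.1 h)
    obtain ⟨v, hvmem, hv0⟩ := Submodule.exists_mem_ne_zero_of_ne_bot hob
    have hvK : ∀ w ∈ D, ⟪w, v⟫ = 0 := fun w hw =>
      (Submodule.mem_orthogonal _ _).1 hvmem w (Submodule.subset_span hw)
    have hv : v ∈ K₂ := by
      have h1 : v ∈ ProperCone.innerDual D := by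
        rw [ProperCone.mem_innerDual]
        intro x hx
        exact (hvK x hx).ge
      rw [hbi] at h1
      exact h1
    have hvneg : -v ∈ K₂ := by
      have h1 : -v ∈ ProperCone.innerDual D := by
        rw [ProperCone.mem_innerDual]
        intro x hx
        rw [inner_neg_right, hvK x hx, neg_zero]
      rw [hbi] at h1
      exact h1
    exact hv0 (hpointed v hv hvneg)
  obtain ⟨v₀, hv₀⟩ := hDint
  obtain ⟨ε, hε, hb⟩ := Metric.mem_nhds_iff.1 (mem_interior_iff_mem_nhds.1 hv₀)
  refine ⟨v₀, ε/2, by positivity, ?_⟩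
  intro x hx
  rcases eq_or_ne x 0 with rfl | hx0
  · simp
  · have hxn : 0 < ‖x‖ := norm_pos_iff.2 hx0
    have hw : v₀ - (ε/2) • ‖x‖⁻¹ • x ∈ D := by
      apply hb
      rw [Metric.mem_ball, dist_eq_norm]
      have : v₀ - (ε/2) • ‖x‖⁻¹ • x - v₀ = -((ε/2) • ‖x‖⁻¹ • x) := by ring_nf; abel
      rw [this, norm_neg, norm_smul, norm_smul, norm_inv, norm_norm, Real.norm_eq_abs,
        abs_of_nonneg (by positivity), inv_mul_cancel₀ hxn.ne', mul_one]
      linarith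
    have h2 := ProperCone.mem_innerDual.1 hw hx
    rw [inner_sub_right, real_inner_smul_right, real_inner_smul_right,
      real_inner_self_eq_norm_sq] at h2
    have hxx : ‖x‖⁻¹ * ‖x‖^2 = ‖x‖ := by
      field_simp
    nlinarith [h2]

theorem keyCLM {d : ℕ} (K₂ : Set (EuclideanSpace ℝ (Fin d)))
    (u v : EuclideanSpace ℝ (Fin d)) (r ε : ℝ) (hr : 0 < r) (hε : 0 < ε) (hu0 : u ≠ 0)
    (hball : ∀ x : EuclideanSpace ℝ (Fin d), ‖x‖ ≤ r → u + x ∈ K₂)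
    (hpos : ∀ x ∈ K₂, ε * ‖x‖ ≤ ⟪x, v⟫) :
    ∃ c : ℝ, 0 < c ∧ ∀ m : ℕ,
      ∀ f : Fin m → (EuclideanSpace ℝ (Fin d) →L[ℝ] EuclideanSpace ℝ (Fin d)),
      (∀ i, ∀ x ∈ K₂, f i x ∈ K₂) →
      c * (∑ i, ‖f i‖) ≤ ‖∑ i, f i‖ := by
  have huK : u ∈ K₂ := by simpa using hball 0 (by simp [hr.le])
  have hun : 0 < ‖u‖ := norm_pos_iff.2 hu0
  have hvn : 0 < ‖v‖ := by
    have h1 := hpos u huK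
    have h2 := real_inner_le_norm u v
    nlinarith
  have hkey : ∀ f : EuclideanSpace ℝ (Fin d) →L[ℝ] EuclideanSpace ℝ (Fin d),
      (∀ x ∈ K₂, f x ∈ K₂) → ε * r * ‖f‖ ≤ 3 * ⟪f u, v⟫ := by
    intro f hf
    have hTnn : 0 ≤ ⟪f u, v⟫ := le_trans (by positivity) (hpos (f u) (hf u huK))
    have hb : ∀ x : EuclideanSpace ℝ (Fin d), ‖x‖ = 1 →
        ε * r * ‖f x‖ ≤ 3 * ⟪f u, v⟫ := by
      intro x hx
      have ha : u + r • x ∈ K₂ := hball _ (by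
        rw [norm_smul, hx, Real.norm_eq_abs, abs_of_pos hr, mul_one])
      have hbm : u + r • (-x) ∈ K₂ := hball _ (by
        rw [norm_smul, norm_neg, hx, Real.norm_eq_abs, abs_of_pos hr, mul_one])
      have e1 : ⟪f (u + r • x), v⟫ = ⟪f u, v⟫ + r * ⟪f x, v⟫ := by
        rw [map_add, _root_.map_smul, inner_add_left, real_inner_smul_left]
      have e2 : ⟪f (u + r • (-x)), v⟫ = ⟪f u, v⟫ - r * ⟪f x, v⟫ := by
        rw [map_add, _root_.map_smul, map_neg, inner_add_left, real_inner_smul_left,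
          inner_neg_left]
        ring
      have hfa : ε * ‖f (u + r • x)‖ ≤ ⟪f u, v⟫ + r * ⟪f x, v⟫ :=
        e1 ▸ hpos _ (hf _ ha)
      have hfb : (0 : ℝ) ≤ ⟪f u, v⟫ - r * ⟪f x, v⟫ :=
        e2 ▸ le_trans (by positivity) (hpos _ (hf _ hbm))
      have hTu : ε * ‖f u‖ ≤ ⟪f u, v⟫ := hpos _ (hf u huK)
      have htri : r * ‖f x‖ ≤ ‖f (u + r • x)‖ + ‖f u‖ := by
        have hrs : r • f x = f (u + r • x) - f u := by
          rw [map_add, _root_.map_smul]; abel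
        calc r * ‖f x‖ = ‖r • f x‖ := by
              rw [norm_smul, Real.norm_eq_abs, abs_of_pos hr]
          _ = ‖f (u + r • x) - f u‖ := by rw [hrs]
          _ ≤ _ := norm_sub_le _ _
      nlinarith [mul_le_mul_of_nonneg_left htri hε.le, norm_nonneg (f u),
        norm_nonneg (f (u + r • x))]
    have hC : ‖f‖ ≤ 3 * ⟪f u, v⟫ / (ε * r) := by
      apply ContinuousLinearMap.opNorm_le_bound _ (by positivity)
      intro x
      rcases eq_or_ne x 0 with rfl | h0
      · simp
      · have hxn : 0 < ‖x‖ := norm_pos_iff.2 h0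
        have hx1 : ‖(‖x‖⁻¹ • x)‖ = 1 := by
          rw [norm_smul, Real.norm_eq_abs, abs_of_pos (by positivity),
            inv_mul_cancel₀ hxn.ne']
        have hbx := hb _ hx1
        rw [_root_.map_smul, norm_smul, Real.norm_eq_abs, abs_of_pos (by positivity)] at hbx
        rw [div_mul_eq_mul_div, le_div_iff₀ (by positivity)]
        -- hbx : ε * r * (‖x‖⁻¹ * ‖f x‖) ≤ 3 * ⟪f u, v⟫
        have := mul_le_mul_of_nonneg_left hbx hxn.le
        rw [show ‖x‖ * (ε * r * (‖x‖⁻¹ * ‖f x‖)) = (‖x‖ * ‖x‖⁻¹) * (ε * r * ‖f x‖) by ring,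
          mul_inv_cancel₀ hxn.ne', one_mul] at this
        nlinarith
    rw [le_div_iff₀ (by positivity)] at hC
    nlinarith [hC]
  refine ⟨ε * r / (3 * ‖u‖ * ‖v‖), by positivity, fun m f hf => ?_⟩
  have h1 : ε * r * (∑ i, ‖f i‖) ≤ 3 * ⟪(∑ i, f i) u, v⟫ := by
    rw [ContinuousLinearMap.sum_apply, sum_inner, Finset.mul_sum, Finset.mul_sum]
    exact Finset.sum_le_sum fun i _ => hkey (f i) (hf i)
  have h2 : ⟪(∑ i, f i) u, v⟫ ≤ ‖∑ i, f i‖ * ‖u‖ * ‖v‖ := by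
    calc ⟪(∑ i, f i) u, v⟫ ≤ ‖(∑ i, f i) u‖ * ‖v‖ := real_inner_le_norm _ _
      _ ≤ ‖∑ i, f i‖ * ‖u‖ * ‖v‖ := by
          have := (∑ i, f i).le_opNorm u
          nlinarith [norm_nonneg v]
  rw [div_mul_eq_mul_div, div_le_iff₀ (by positivity)]
  nlinarith [h1, h2]

theorem stmt8 {d : ℕ} (K : Set (Fin d → ℝ)) (hK : IsCone K) :
    ∃ c : ℝ, 0 < c ∧ ∀ m : ℕ, 1 ≤ m → ∀ M : Fin m → Matrix (Fin d) (Fin d) ℝ,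
      (∀ i : Fin m, ∀ x ∈ K, (M i).mulVec x ∈ K) →
      c * (∑ i, matOpNorm (M i)) ≤ matOpNorm (∑ i, M i) := by
  classical
  obtain ⟨hclosed, hint, hadd, hsmul, hpointed⟩ := hK
  rcases Nat.eq_zero_or_pos d with hd | hd
  · subst hd
    refine ⟨1, one_pos, fun m _ M _ => ?_⟩
    have hz : ∀ N : Matrix (Fin 0) (Fin 0) ℝ, matOpNorm N = 0 := by
      intro N
      have hset : {r : ℝ | ∃ x : Fin 0 → ℝ, euclNorm x ≤ 1 ∧ r = euclNorm (N.mulVec x)}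
          = {(0 : ℝ)} := by
        ext r
        simp [euclNorm]
      rw [matOpNorm, hset, csSup_singleton]
    simp [hz]
  · -- transfer everything to EuclideanSpace
    set e := WithLp.equiv 2 (Fin d → ℝ) with he
    set K₂ : Set (EuclideanSpace ℝ (Fin d)) := ⇑e ⁻¹' K with hK₂
    have hclosed₂ : IsClosed K₂ := hclosed.preimage (PiLp.continuous_ofLp 2 _)
    have hadd₂ : ∀ x ∈ K₂, ∀ y ∈ K₂, x + y ∈ K₂ := by
      intro x hx y hy
      simp only [hK₂, Set.mem_preimage, WithLp.equiv_apply, WithLp.ofLp_add] at *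
      exact hadd _ hx _ hy
    have hsmul₂ : ∀ c : ℝ, 0 ≤ c → ∀ x ∈ K₂, c • x ∈ K₂ := by
      intro c hc x hx
      simp only [hK₂, Set.mem_preimage, WithLp.equiv_apply, WithLp.ofLp_smul] at *
      exact hsmul c hc _ hx
    have hpointed₂ : ∀ x ∈ K₂, -x ∈ K₂ → x = 0 := by
      intro x hx hnx
      simp only [hK₂, Set.mem_preimage, WithLp.equiv_apply, WithLp.ofLp_neg] at hx hnx
      have h0 : e x = 0 := hpointed _ hx hnx
      have := congrArg e.symm h0
      simpa [he] using this
    -- interior point and ball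
    obtain ⟨u₀, hu₀⟩ := hint
    obtain ⟨ε, hε, hball₀⟩ := Metric.mem_nhds_iff.1 (mem_interior_iff_mem_nhds.1 hu₀)
    have hcoord : ∀ x : EuclideanSpace ℝ (Fin d), ‖e x‖ ≤ ‖x‖ := by
      intro x
      rw [pi_norm_le_iff_of_nonneg (norm_nonneg x)]
      intro i
      rw [he, WithLp.equiv_apply]
      rw [EuclideanSpace.norm_eq,
        show ‖x i‖ = Real.sqrt (‖x i‖ ^ 2) from (Real.sqrt_sq (norm_nonneg _)).symm]
      exact Real.sqrt_le_sqrt (Finset.single_le_sum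
        (f := fun j => ‖x j‖ ^ 2) (fun j _ => by positivity) (Finset.mem_univ i))
    set u : EuclideanSpace ℝ (Fin d) := e.symm u₀ with hu
    have hball : ∀ x : EuclideanSpace ℝ (Fin d), ‖x‖ ≤ ε / 2 → u + x ∈ K₂ := by
      intro x hx
      have hmem : e (u + x) ∈ K := by
        apply hball₀
        rw [Metric.mem_ball, show e (u + x) = e u + e x from rfl, hu, Equiv.apply_symm_apply,
          dist_eq_norm, add_sub_cancel_left]
        exact lt_of_le_of_lt ((hcoord x).trans hx) (by linarith)
      exact hmem
    have hu0 : u ≠ 0 := by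
      intro h0
      have hu₀0 : u₀ = 0 := by
        have := congrArg e h0
        rw [hu, Equiv.apply_symm_apply] at this
        simpa [he] using this
      obtain ⟨i0, _⟩ : ∃ i : Fin d, True := ⟨⟨0, hd⟩, trivial⟩
      set y : Fin d → ℝ := Pi.single i0 (ε / 4) with hy
      have hyn : ‖y‖ ≤ ε / 4 := by
        rw [pi_norm_le_iff_of_nonneg (by positivity)]
        intro i
        rcases eq_or_ne i i0 with rfl | hne
        · rw [hy, Pi.single_eq_same, Real.norm_eq_abs, abs_of_pos (by positivity)]
        · rw [hy, Pi.single_eq_of_ne hne, norm_zero]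
          positivity
      have hyK : y ∈ K := hball₀ (by
        rw [Metric.mem_ball, hu₀0, dist_zero_right]; linarith)
      have hyK' : -y ∈ K := hball₀ (by
        rw [Metric.mem_ball, hu₀0, dist_zero_right, norm_neg]; linarith)
      have := hpointed y hyK hyK'
      have h4 : y i0 = 0 := by rw [this]; rfl
      rw [hy, Pi.single_eq_same] at h4
      linarith
    -- strictly positive functional
    obtain ⟨v, ε', hε', hpos⟩ := posFunctional K₂ hclosed₂ hadd₂ hsmul₂ hpointed₂
      ⟨u, by
        have : e u ∈ K := by
          rw [hu, Equiv.apply_symm_apply]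
          exact interior_subset hu₀
        exact this⟩
    obtain ⟨c, hc, hkey⟩ := keyCLM K₂ u v (ε / 2) ε' (by positivity) hε' hu0 hball hpos
    refine ⟨c, hc, fun m _ M hM => ?_⟩
    have hMf : ∀ i, ∀ x ∈ K₂, Matrix.toEuclideanCLM (𝕜 := ℝ) (M i) x ∈ K₂ := by
      intro i x hx
      have : e (Matrix.toEuclideanCLM (𝕜 := ℝ) (M i) x) = (M i).mulVec (e x) := by
        rw [he]; exact Matrix.ofLp_toEuclideanCLM _ _
      have hmem : e (Matrix.toEuclideanCLM (𝕜 := ℝ) (M i) x) ∈ K := by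
        rw [this]
        exact hM i _ hx
      exact hmem
    have hsum : (∑ i, Matrix.toEuclideanCLM (𝕜 := ℝ) (M i))
        = Matrix.toEuclideanCLM (𝕜 := ℝ) (∑ i, M i) := (map_sum _ _ _).symm
    calc c * ∑ i, matOpNorm (M i)
        = c * ∑ i, ‖Matrix.toEuclideanCLM (𝕜 := ℝ) (M i)‖ := by
          simp_rw [matOpNorm_eq]
      _ ≤ ‖∑ i, Matrix.toEuclideanCLM (𝕜 := ℝ) (M i)‖ :=
          hkey m (fun i => Matrix.toEuclideanCLM (𝕜 := ℝ) (M i)) hMf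
      _ = ‖Matrix.toEuclideanCLM (𝕜 := ℝ) (∑ i, M i)‖ := by rw [hsum]
      _ = matOpNorm (∑ i, M i) := (matOpNorm_eq _).symm
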